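/- Let p₁ ⊂ so(1,5) be the parabolic with Levi decomposition p₁ = (ℝ ⊕ so(4)) ⋉ ℝ⁴, π: p₁ → ℝ ⊕ so(4) the projection, and k ⊂ p₁ a subalgebra with dim k ≥ 8 such that so(4) ⊄ π(k). Then k ⊇ ℝ⁴ (the abelian nilradical r₁). -/

import Mathlib

/-- Membership in the parabolic subalgebra `p₁ ⊂ so(1,5)` stabilizing a null line: in the
basis `e₀, …, e₅` where the Lorentzian metric is `[[0,0,1],[0,I₄,0],[1,0,0]]` (block form),
`p₁` consists of the matrices `[[r, -vᵀ, 0],[0, R, v],[0, 0, -r]]` with `r ∈ ℝ`,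
`R ∈ so(4)`, `v ∈ ℝ⁴`; so `p₁ = (ℝ ⊕ so(4)) ⋉ ℝ⁴`. -/
def memP1 (n : ℕ) (X : Matrix (Fin n) (Fin n) ℝ) : Prop :=
  ∀ i j : Fin n,
    (1 ≤ i.val → j.val = 0 → X i j = 0) ∧
    (i.val = n - 1 → j.val ≤ n - 2 → X i j = 0) ∧
    (i.val = 0 → j.val = n - 1 → X i j = 0) ∧
    (1 ≤ i.val → i.val ≤ n - 2 → 1 ≤ j.val → j.val ≤ n - 2 → X i j = -X j i) ∧
    (i.val = n - 1 → j.val = n - 1 → ∀ k l : Fin n, k.val = 0 → l.val = 0 →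
      X i j = -X k l) ∧
    (i.val = 0 → 1 ≤ j.val → j.val ≤ n - 2 → ∀ k : Fin n, k.val = n - 1 →
      X i j = -X j k)

/-- Membership in the abelian nilradical `r₁ ≅ ℝ^{n-2}` of `p₁`. -/
def memR1 (n : ℕ) (X : Matrix (Fin n) (Fin n) ℝ) : Prop :=
  memP1 n X ∧
  (∀ i j : Fin n, 1 ≤ i.val → i.val ≤ n - 2 → 1 ≤ j.val → j.val ≤ n - 2 → X i j = 0) ∧
  (∀ i j : Fin n, i.val = j.val → X i j = 0)

/-- The projection `π : p₁ → r₀ = ℝ ⊕ so(n-2)` killing the nilradical `r₁`. -/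
def piP1 (n : ℕ) (X : Matrix (Fin n) (Fin n) ℝ) : Matrix (Fin n) (Fin n) ℝ :=
  Matrix.of fun i j =>
    if (i.val = 0 ∧ 1 ≤ j.val ∧ j.val ≤ n - 2) ∨
       (1 ≤ i.val ∧ i.val ≤ n - 2 ∧ j.val = n - 1) then 0 else X i j

/-- Membership in the copy of `so(n-2)` inside `r₀ ⊂ p₁`. -/
def memSOInner (n : ℕ) (X : Matrix (Fin n) (Fin n) ℝ) : Prop :=
  (∀ i j : Fin n, 1 ≤ i.val → i.val ≤ n - 2 → 1 ≤ j.val → j.val ≤ n - 2 → X i j = -X j i) ∧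
  (∀ i j : Fin n, i.val = 0 ∨ i.val = n - 1 ∨ j.val = 0 ∨ j.val = n - 1 → X i j = 0)

attribute [local instance 100] LieRing.ofAssociativeRing

namespace SO15Aux

-- basic consequences of memP1 for n = 6
variable {X Z : Matrix (Fin 6) (Fin 6) ℝ}

lemma col0 (hX : memP1 6 X) (i j : Fin 6) (hi : 1 ≤ i.val) (hj : j.val = 0) : X i j = 0 := (hX i j).1 hi hj
lemma row5 (hX : memP1 6 X) (i j : Fin 6) (hi : i.val = 5) (hj : j.val ≤ 4) : X i j = 0 :=
  (hX i j).2.1 hi (by omega)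
lemma corner (hX : memP1 6 X) (i j : Fin 6) (hi : i.val = 0) (hj : j.val = 5) : X i j = 0 :=
  (hX i j).2.2.1 hi (by omega)
lemma skewIn (hX : memP1 6 X) (i j : Fin 6) (hi1 : 1 ≤ i.val) (hi2 : i.val ≤ 4) (hj1 : 1 ≤ j.val)
    (hj2 : j.val ≤ 4) : X i j = -X j i := (hX i j).2.2.2.1 hi1 (by omega) hj1 (by omega)
lemma diag5 (hX : memP1 6 X) (i j : Fin 6) (hi : i.val = 5) (hj : j.val = 5) : X i j = -X 0 0 :=
  (hX i j).2.2.2.2.1 hi hj 0 0 rfl rfl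
lemma row0 (hX : memP1 6 X) (i j : Fin 6) (hi : i.val = 0) (hj1 : 1 ≤ j.val) (hj2 : j.val ≤ 4) :
    X i j = -X j 5 := (hX i j).2.2.2.2.2 hi hj1 (by omega) 5 rfl

/-- Elements of `p₁` are determined by the `r`-part, inner ℝ block and `v`-part. -/
lemma p1_ext (hX : memP1 6 X) (hZ : memP1 6 Z)
    (h0 : X 0 0 = Z 0 0)
    (hin : ∀ i j : Fin 6, 1 ≤ i.val → i.val ≤ 4 → 1 ≤ j.val → j.val ≤ 4 → X i j = Z i j)
    (hv : ∀ i : Fin 6, 1 ≤ i.val → i.val ≤ 4 → X i 5 = Z i 5) : X = Z := by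
  ext i j
  rcases Nat.lt_or_ge i.val 1 with hi | hi
  · -- i = 0
    have hi0 : i.val = 0 := by omega
    rcases Nat.lt_or_ge j.val 1 with hj | hj
    · have hj0 : j.val = 0 := by omega
      have e1 : i = 0 := by exact Fin.ext hi0
      have e2 : j = 0 := by exact Fin.ext hj0
      rw [e1, e2]; exact h0
    · rcases Nat.lt_or_ge j.val 5 with hj5 | hj5
      · rw [row0 hX i j hi0 hj (by omega), row0 hZ i j hi0 hj (by omega)]
        have := hv j hj (by omega); rw [this]
      · exact (corner hX i j hi0 (by omega)).trans (corner hZ i j hi0 (by omega)).symm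
  · rcases Nat.lt_or_ge i.val 5 with hi5 | hi5
    · -- 1 ≤ i ≤ 4
      rcases Nat.lt_or_ge j.val 1 with hj | hj
      · exact (col0 hX i j hi (by omega)).trans (col0 hZ i j hi (by omega)).symm
      · rcases Nat.lt_or_ge j.val 5 with hj5 | hj5
        · exact hin i j hi (by omega) hj (by omega)
        · have e2 : j = 5 := by exact Fin.ext (by omega)
          rw [e2]; exact hv i hi (by omega)
    · -- i = 5
      rcases Nat.lt_or_ge j.val 5 with hj5 | hj5
      · exact (row5 hX i j (by omega) (by omega)).trans (row5 hZ i j (by omega) (by omega)).symm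
      · rw [diag5 hX i j (by omega) (by omega), diag5 hZ i j (by omega) (by omega), h0]

noncomputable section

abbrev E4 := EuclideanSpace ℝ (Fin 4)

def emb (i : Fin 4) : Fin 6 := ⟨i.val + 1, by omega⟩

/-- the `v`-part of a matrix -/
def nu : Matrix (Fin 6) (Fin 6) ℝ →ₗ[ℝ] E4 where
  toFun X := WithLp.toLp 2 fun i => X (emb i) 5
  map_add' X Y := by ext i; simp [Matrix.add_apply]
  map_smul' c X := by ext i; simp [Matrix.smul_apply]

/-- the `(r, R)`-part of a matrix -/
def Lmap : Matrix (Fin 6) (Fin 6) ℝ →ₗ[ℝ] ℝ × Matrix (Fin 4) (Fin 4) ℝ where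
  toFun X := (X 0 0, Matrix.of fun i j => X (emb i) (emb j))
  map_add' X Y := by
    refine Prod.ext (by simp [Matrix.add_apply]) ?_
    ext i j; simp [Matrix.add_apply]
  map_smul' c X := by
    refine Prod.ext (by simp [Matrix.smul_apply]) ?_
    ext i j; simp [Matrix.smul_apply]

@[simp] lemma nu_apply (X : Matrix (Fin 6) (Fin 6) ℝ) (i : Fin 4) :
    nu X i = X (emb i) 5 := rfl

@[simp] lemma Lmap_fst (X : Matrix (Fin 6) (Fin 6) ℝ) : (Lmap X).1 = X 0 0 := rfl
@[simp] lemma Lmap_snd (X : Matrix (Fin 6) (Fin 6) ℝ) (i j : Fin 4) :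
    (Lmap X).2 i j = X (emb i) (emb j) := rfl

lemma emb_val (i : Fin 4) : (emb i).val = i.val + 1 := rfl

/-- entries of an "r₁-type" element: `memP1`, zero `r` and inner ℝ parts. -/
lemma r1_entries {Z : Matrix (Fin 6) (Fin 6) ℝ} (hZ : memP1 6 Z) (h0 : Lmap Z = 0) :
    (∀ m : Fin 6, Z m 0 = 0) ∧ (∀ m : Fin 6, Z 5 m = 0) ∧ Z 0 5 = 0 ∧
    (∀ i j : Fin 6, 1 ≤ i.val → i.val ≤ 4 → 1 ≤ j.val → j.val ≤ 4 → Z i j = 0) ∧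
    (∀ j : Fin 6, 1 ≤ j.val → j.val ≤ 4 → Z 0 j = -Z j 5) := by
  have hr : Z 0 0 = 0 := congrArg Prod.fst h0
  have hR : ∀ i j : Fin 4, Z (emb i) (emb j) = 0 := fun i j => by
    have := congrArg Prod.snd h0
    calc Z (emb i) (emb j) = (Lmap Z).2 i j := rfl
    _ = (0 : Matrix (Fin 4) (Fin 4) ℝ) i j := by rw [this]; rfl
    _ = 0 := rfl
  refine ⟨fun m => ?_, fun m => ?_, corner hZ 0 5 rfl rfl, fun i j hi1 hi2 hj1 hj2 => ?_, 
    fun j hj1 hj2 => row0 hZ 0 j rfl hj1 hj2⟩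
  · rcases Nat.lt_or_ge m.val 1 with h | h
    · have : m = 0 := Fin.ext (by omega)
      rw [this]; exact hr
    · exact col0 hZ m 0 h rfl
  · rcases Nat.lt_or_ge m.val 5 with h | h
    · exact row5 hZ 5 m rfl (by omega)
    · have : m = 5 := Fin.ext (by omega)
      rw [this, diag5 hZ 5 5 rfl rfl, hr, neg_zero]
  · have := hR ⟨i.val - 1, by omega⟩ ⟨j.val - 1, by omega⟩
    have ei : emb ⟨i.val - 1, by omega⟩ = i := Fin.ext (by simp [emb_val]; omega)
    have ej : emb ⟨j.val - 1, by omega⟩ = j := Fin.ext (by simp [emb_val]; omega)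
    rwa [ei, ej] at this

@[simp] lemma emb0 : emb 0 = 1 := by decide
@[simp] lemma emb1 : emb 1 = 2 := by decide
@[simp] lemma emb2 : emb 2 = 3 := by decide
@[simp] lemma emb3 : emb 3 = 4 := by decide

lemma emb_pos (i : Fin 4) : 1 ≤ (emb i).val := by simp [emb_val]
lemma emb_le (i : Fin 4) : (emb i).val ≤ 4 := by have := i.isLt; simp [emb_val]

lemma key_bracket {X Z : Matrix (Fin 6) (Fin 6) ℝ} (hX : memP1 6 X) (hZ : memP1 6 Z)
    (h0 : Lmap Z = 0) :
    Lmap ⁅X, Z⁆ = 0 ∧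
    nu ⁅X, Z⁆ = (WithLp.toLp 2 fun i => (∑ j : Fin 4, X (emb i) (emb j) * Z (emb j) 5)
      + X 0 0 * Z (emb i) 5 : E4) := by
  obtain ⟨z1, z2, z3, z4, z5⟩ := r1_entries hZ h0
  have hx0 : ∀ i : Fin 4, X (emb i) 0 = 0 := fun i => col0 hX _ 0 (emb_pos i) rfl
  have hzi : ∀ (i : Fin 4) (m : Fin 6), 1 ≤ m.val → m.val ≤ 4 → Z (emb i) m = 0 :=
    fun i m h1 h2 => z4 _ m (emb_pos i) (emb_le i) h1 h2
  have hmul1 : ∀ i : Fin 4, (X * Z) (emb i) 5 = ∑ j : Fin 4, X (emb i) (emb j) * Z (emb j) 5 := by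
    intro i
    rw [Matrix.mul_apply, Fin.sum_univ_six, Fin.sum_univ_four]
    rw [hx0 i, z2 5]
    simp only [emb0, emb1, emb2, emb3]
    ring
  have hmul2 : ∀ i : Fin 4, (Z * X) (emb i) 5 = -(X 0 0 * Z (emb i) 5) := by
    intro i
    rw [Matrix.mul_apply, Fin.sum_univ_six]
    rw [corner hX 0 5 rfl rfl, hzi i 1 (by decide) (by decide), hzi i 2 (by decide) (by decide),
      hzi i 3 (by decide) (by decide), hzi i 4 (by decide) (by decide),
      diag5 hX 5 5 rfl rfl]
    ring
  constructor
  · have f1 : (⁅X, Z⁆ : Matrix (Fin 6) (Fin 6) ℝ) 0 0 = 0 := by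
      rw [Ring.lie_def, Matrix.sub_apply]
      have h1 : (X * Z) 0 0 = 0 := by
        rw [Matrix.mul_apply]
        exact Finset.sum_eq_zero fun m _ => by rw [z1 m, mul_zero]
      have h2 : (Z * X) 0 0 = 0 := by
        rw [Matrix.mul_apply]
        refine Finset.sum_eq_zero fun m _ => ?_
        rcases Nat.lt_or_ge m.val 1 with h | h
        · have : m = 0 := Fin.ext (by omega)
          rw [this, z1 0, zero_mul]
        · rw [col0 hX m 0 h rfl, mul_zero]
      rw [h1, h2, sub_zero]
    have f2 : ∀ i j : Fin 4, (⁅X, Z⁆ : Matrix (Fin 6) (Fin 6) ℝ) (emb i) (emb j) = 0 := by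
      intro i j
      rw [Ring.lie_def, Matrix.sub_apply]
      have h1 : (X * Z) (emb i) (emb j) = 0 := by
        rw [Matrix.mul_apply]
        refine Finset.sum_eq_zero fun m _ => ?_
        rcases Nat.lt_or_ge m.val 1 with h | h
        · have : m = 0 := Fin.ext (by omega)
          rw [this, hx0 i, zero_mul]
        · rcases Nat.lt_or_ge m.val 5 with h5 | h5
          · rw [z4 m _ h (by omega) (emb_pos j) (emb_le j), mul_zero]
          · have : m = 5 := Fin.ext (by omega)
            rw [this, z2 (emb j), mul_zero]
      have h2 : (Z * X) (emb i) (emb j) = 0 := by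
        rw [Matrix.mul_apply]
        refine Finset.sum_eq_zero fun m _ => ?_
        rcases Nat.lt_or_ge m.val 1 with h | h
        · have : m = 0 := Fin.ext (by omega)
          rw [this, z1 (emb i), zero_mul]
        · rcases Nat.lt_or_ge m.val 5 with h5 | h5
          · rw [hzi i m h (by omega), zero_mul]
          · have : m = 5 := Fin.ext (by omega)
            rw [this, row5 hX 5 (emb j) rfl (emb_le j), mul_zero]
      rw [h1, h2, sub_zero]
    refine Prod.ext f1 ?_
    show (Matrix.of fun i j => (⁅X, Z⁆ : Matrix (Fin 6) (Fin 6) ℝ) (emb i) (emb j)) = 0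
    ext i j
    exact f2 i j
  · ext i
    show (⁅X, Z⁆ : Matrix (Fin 6) (Fin 6) ℝ) (emb i) 5 = _
    rw [Ring.lie_def, Matrix.sub_apply, hmul1 i, hmul2 i]
    ring

lemma memP1_zero : memP1 6 (0 : Matrix (Fin 6) (Fin 6) ℝ) := by
  intro i j
  refine ⟨fun _ _ => rfl, fun _ _ => rfl, fun _ _ => rfl, fun _ _ _ _ => by simp,
    fun _ _ kk ll _ _ => by simp, fun _ _ _ kk _ => by simp⟩

section withk
variable (k : LieSubalgebra ℝ (Matrix (Fin 6) (Fin 6) ℝ))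

def fK : k.toSubmodule →ₗ[ℝ] ℝ × Matrix (Fin 4) (Fin 4) ℝ := Lmap.domRestrict k.toSubmodule

def hSub : Submodule ℝ (ℝ × Matrix (Fin 4) (Fin 4) ℝ) := LinearMap.range (fK k)

def gmap : ↥(LinearMap.ker (fK k)) →ₗ[ℝ] E4 :=
  (nu.comp k.toSubmodule.subtype).domRestrict (LinearMap.ker (fK k))

def Vsub : Submodule ℝ E4 := LinearMap.range (gmap k)

lemma mem_hSub {p : ℝ × Matrix (Fin 4) (Fin 4) ℝ} :
    p ∈ hSub k ↔ ∃ X, X ∈ k ∧ Lmap X = p := by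
  constructor
  · rintro ⟨⟨X, hX⟩, h⟩
    exact ⟨X, hX, h⟩
  · rintro ⟨X, h1, h2⟩
    exact ⟨⟨X, h1⟩, h2⟩

lemma mem_Vsub {w : E4} :
    w ∈ Vsub k ↔ ∃ Z, Z ∈ k ∧ Lmap Z = 0 ∧ nu Z = w := by
  constructor
  · rintro ⟨⟨⟨Z, hZk⟩, hker⟩, hw⟩
    exact ⟨Z, hZk, hker, hw⟩
  · rintro ⟨Z, h1, h2, h3⟩
    exact ⟨⟨⟨Z, h1⟩, h2⟩, h3⟩

variable {k}

lemma gmap_inj (hsub : ∀ X ∈ k, memP1 6 X) : Function.Injective (gmap k) := by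
  rw [← LinearMap.ker_eq_bot, LinearMap.ker_eq_bot']
  rintro ⟨⟨Z, hZk⟩, hker⟩ h0
  have hZ0 : Lmap Z = 0 := hker
  have hnu : nu Z = 0 := h0
  have : Z = 0 := by
    refine p1_ext (hsub Z hZk) memP1_zero ?_ ?_ ?_
    · have : Lmap Z = 0 := hZ0
      exact congrArg Prod.fst this
    · intro i j hi1 hi2 hj1 hj2
      obtain ⟨_, _, _, z4, _⟩ := r1_entries (hsub Z hZk) hZ0
      exact z4 i j hi1 hi2 hj1 hj2
    · intro i hi1 hi2
      have ei : emb ⟨i.val - 1, by omega⟩ = i := Fin.ext (by simp [emb_val]; omega)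
      have h5 : Z (emb ⟨i.val - 1, by omega⟩) 5 = 0 := by
        have : nu Z ⟨i.val - 1, by omega⟩ = (0 : E4) ⟨i.val - 1, by omega⟩ := by rw [hnu]
        simpa using this
      rw [ei] at h5
      simpa using h5
  exact Subtype.ext (Subtype.ext this)

lemma dim_split (hsub : ∀ X ∈ k, memP1 6 X) : Module.finrank ℝ ↥(hSub k) + Module.finrank ℝ ↥(Vsub k)
    = Module.finrank ℝ ↥k := by
  have h1 := LinearMap.finrank_range_add_finrank_ker (fK k)
  have h2 : Module.finrank ℝ ↥(Vsub k) = Module.finrank ℝ ↥(LinearMap.ker (fK k)) :=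
    LinearMap.finrank_range_of_inj (gmap_inj hsub)
  rw [hSub, h2]
  exact h1

/-- the action of a `(r,R)` pair's matrix part on `E4` -/
def mv (R : Matrix (Fin 4) (Fin 4) ℝ) : E4 →ₗ[ℝ] E4 where
  toFun w := WithLp.toLp 2 fun i => ∑ j, R i j * w j
  map_add' x y := by
    ext i
    simp [PiLp.add_apply, mul_add, Finset.sum_add_distrib]
  map_smul' c x := by
    ext i
    simp only [PiLp.toLp_apply, PiLp.smul_apply, smul_eq_mul, Finset.mul_sum, RingHom.id_apply]
    exact Finset.sum_congr rfl fun j _ => by ring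

@[simp] lemma mv_apply (R : Matrix (Fin 4) (Fin 4) ℝ) (w : E4) (i : Fin 4) :
    mv R w i = ∑ j, R i j * w j := rfl

lemma mv_stab (hsub : ∀ X ∈ k, memP1 6 X) {p : ℝ × Matrix (Fin 4) (Fin 4) ℝ} (hp : p ∈ hSub k) {w : E4}
    (hw : w ∈ Vsub k) : mv p.2 w ∈ Vsub k := by
  rw [mem_hSub] at hp
  rw [mem_Vsub] at hw
  obtain ⟨X, hXk, hXp⟩ := hp
  obtain ⟨Z, hZk, hZ0, hZw⟩ := hw
  have hb := key_bracket (hsub X hXk) (hsub Z hZk) hZ0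
  have hWk : ⁅X, Z⁆ ∈ k := k.lie_mem hXk hZk
  have hmem : nu ⁅X, Z⁆ ∈ Vsub k := (mem_Vsub k).2 ⟨⁅X, Z⁆, hWk, hb.1, rfl⟩
  have heq : nu ⁅X, Z⁆ = mv p.2 w + p.1 • w := by
    rw [hb.2]
    ext i
    rw [PiLp.add_apply, PiLp.smul_apply, mv_apply, smul_eq_mul]
    subst hXp hZw
    simp only [PiLp.toLp_apply, Lmap_snd, Lmap_fst, nu_apply]
  have : mv p.2 w = nu ⁅X, Z⁆ - p.1 • w := by rw [heq]; abel
  rw [this]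
  exact Submodule.sub_mem _ hmem (Submodule.smul_mem _ _ ((mem_Vsub k).2 ⟨Z, hZk, hZ0, hZw⟩))

lemma hSub_skew (hsub : ∀ X ∈ k, memP1 6 X) {p : ℝ × Matrix (Fin 4) (Fin 4) ℝ} (hp : p ∈ hSub k) (i j : Fin 4) :
    p.2 i j = -p.2 j i := by
  rw [mem_hSub] at hp
  obtain ⟨X, hXk, hXp⟩ := hp
  subst hXp
  simp only [Lmap_snd]
  exact skewIn (hsub X hXk) _ _ (emb_pos i) (emb_le i) (emb_pos j) (emb_le j)

end withk

section bound
open Module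

lemma E4_inner (x y : E4) : (inner ℝ x y : ℝ) = ∑ i, x i * y i := by
  simp [PiLp.inner_apply, RCLike.inner_apply, mul_comm]

lemma mv_skew_adj {A : Matrix (Fin 4) (Fin 4) ℝ} (hA : ∀ i j, A i j = -A j i)
    (x y : E4) : (inner ℝ (mv A x) y : ℝ) = -(inner ℝ x (mv A y) : ℝ) := by
  simp only [E4_inner, mv_apply]
  rw [← Finset.sum_neg_distrib]
  rw [show ∀ s : Finset (Fin 4), ∑ i ∈ s, (∑ j, A i j * x j) * y i
      = ∑ i ∈ s, ∑ j, A i j * x j * y i from fun s => Finset.sum_congr rfl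
        fun i _ => Finset.sum_mul _ _ _]
  rw [Finset.sum_comm]
  refine Finset.sum_congr rfl fun i _ => ?_
  rw [show -(x i * ∑ j, A i j * y j) = ∑ j, -(x i * (A i j * y j)) by
    rw [Finset.mul_sum, Finset.sum_neg_distrib]]
  refine Finset.sum_congr rfl fun j _ => ?_
  rw [hA j i]
  ring

lemma mv_self_inner_zero {A : Matrix (Fin 4) (Fin 4) ℝ} (hA : ∀ i j, A i j = -A j i)
    (x : E4) : (inner ℝ (mv A x) x : ℝ) = 0 := by
  have h := mv_skew_adj hA x x
  have h2 : (inner ℝ x (mv A x) : ℝ) = (inner ℝ (mv A x) x : ℝ) := real_inner_comm _ _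
  linarith

lemma mv_add (A B : Matrix (Fin 4) (Fin 4) ℝ) (w : E4) :
    mv (A + B) w = mv A w + mv B w := by
  ext i
  simp [mv_apply, Matrix.add_apply, add_mul, Finset.sum_add_distrib, PiLp.add_apply]

lemma mv_smul (c : ℝ) (A : Matrix (Fin 4) (Fin 4) ℝ) (w : E4) :
    mv (c • A) w = c • mv A w := by
  ext i
  simp only [mv_apply, Matrix.smul_apply, PiLp.smul_apply, smul_eq_mul, Finset.mul_sum]
  exact Finset.sum_congr rfl fun j _ => by ring

lemma mv_zero (w : E4) : mv (0 : Matrix (Fin 4) (Fin 4) ℝ) w = 0 := by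
  ext i
  simp [mv_apply]

lemma cardp0 : Fintype.card {q : Fin 0 × Fin 0 // q.1 < q.2} = 0 := by decide
lemma cardp1 : Fintype.card {q : Fin 1 × Fin 1 // q.1 < q.2} = 0 := by decide
lemma cardp2 : Fintype.card {q : Fin 2 × Fin 2 // q.1 < q.2} = 1 := by decide
lemma cardp3 : Fintype.card {q : Fin 3 × Fin 3 // q.1 < q.2} = 3 := by decide
lemma cardp4 : Fintype.card {q : Fin 4 × Fin 4 // q.1 < q.2} = 6 := by decide

lemma pair_count_final (n m : ℕ) (hnm : n + m = 4) (hn : n < 4) (r : ℕ)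
    (hr : r ≤ 1 + Fintype.card {q : Fin n × Fin n // q.1 < q.2}
      + Fintype.card {q : Fin m × Fin m // q.1 < q.2}) : r + n ≤ 7 := by
  interval_cases n
  · have hm : m = 4 := by omega
    subst hm
    rw [cardp0, cardp4] at hr
    omega
  · have hm : m = 3 := by omega
    subst hm
    rw [cardp1, cardp3] at hr
    omega
  · have hm : m = 2 := by omega
    subst hm
    rw [cardp2] at hr
    omega
  · have hm : m = 1 := by omega
    subst hm
    rw [cardp3, cardp1] at hr
    omega

lemma main_bound (V : Submodule ℝ E4) (H : Submodule ℝ (ℝ × Matrix (Fin 4) (Fin 4) ℝ))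
    (hskew : ∀ p ∈ H, ∀ i j : Fin 4, p.2 i j = -p.2 j i)
    (hstab : ∀ p ∈ H, ∀ w ∈ V, mv p.2 w ∈ V)
    (hV : V ≠ ⊤) :
    finrank ℝ ↥H + finrank ℝ ↥V ≤ 7 := by
  classical
  set d := finrank ℝ ↥V with hd
  set d' := finrank ℝ ↥Vᗮ with hd'
  have hsum : d + d' = 4 := by
    rw [hd, hd']
    rw [Submodule.finrank_add_finrank_orthogonal]
    simp [finrank_euclideanSpace]
  have hdlt : d < 4 := by
    have := Submodule.finrank_lt (s := V) hV
    simpa [finrank_euclideanSpace] using this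
  -- bases
  set b : Basis (Fin d) ℝ ↥V := finBasis ℝ ↥V
  set c : Basis (Fin d') ℝ ↥Vᗮ := finBasis ℝ ↥Vᗮ
  set bv : Fin d → E4 := fun i => (b i : E4) with hbv
  set cv : Fin d' → E4 := fun i => (c i : E4) with hcv
  have hbvV : ∀ i, bv i ∈ V := fun i => (b i).2
  have hcvV : ∀ i, cv i ∈ Vᗮ := fun i => (c i).2
  -- expansion of elements of V in terms of bv
  have hspanV : ∀ x : E4, x ∈ V → ∀ w : E4, (∀ i, (inner ℝ w (bv i) : ℝ) = 0) →
      (inner ℝ w x : ℝ) = 0 := by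
    intro x hx w hw
    have : x = ∑ i, b.repr ⟨x, hx⟩ i • bv i := by
      have := congrArg (Subtype.val) (b.sum_repr ⟨x, hx⟩)
      simpa only [hbv, Submodule.coe_sum, Submodule.coe_smul] using this.symm
    rw [this, inner_sum]
    refine Finset.sum_eq_zero fun i _ => ?_
    rw [real_inner_smul_right, hw i, mul_zero]
  have hspanVp : ∀ x : E4, x ∈ Vᗮ → ∀ w : E4, (∀ i, (inner ℝ w (cv i) : ℝ) = 0) →
      (inner ℝ w x : ℝ) = 0 := by
    intro x hx w hw
    have : x = ∑ i, c.repr ⟨x, hx⟩ i • cv i := by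
      have := congrArg (Subtype.val) (c.sum_repr ⟨x, hx⟩)
      simpa only [hcv, Submodule.coe_sum, Submodule.coe_smul] using this.symm
    rw [this, inner_sum]
    refine Finset.sum_eq_zero fun i _ => ?_
    rw [real_inner_smul_right, hw i, mul_zero]
  -- the injective comparison map
  set T := ℝ × ({q : Fin d × Fin d // q.1 < q.2} → ℝ) × ({q : Fin d' × Fin d' // q.1 < q.2} → ℝ)
  let mvEval : E4 → E4 → (Matrix (Fin 4) (Fin 4) ℝ →ₗ[ℝ] ℝ) := fun x y =>
    { toFun := fun R => (inner ℝ (mv R x) y : ℝ)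
      map_add' := fun A B => by
        change (inner ℝ (mv (A + B) x) y : ℝ) = (inner ℝ (mv A x) y : ℝ) + (inner ℝ (mv B x) y : ℝ)
        rw [mv_add, inner_add_left]
      map_smul' := fun a A => by
        change (inner ℝ (mv (a • A) x) y : ℝ) = a • (inner ℝ (mv A x) y : ℝ)
        rw [mv_smul, real_inner_smul_left, smul_eq_mul] }
  let sndMap : ↥H →ₗ[ℝ] Matrix (Fin 4) (Fin 4) ℝ :=
    (LinearMap.snd ℝ ℝ (Matrix (Fin 4) (Fin 4) ℝ)).comp H.subtype
  let fstMap : ↥H →ₗ[ℝ] ℝ := (LinearMap.fst ℝ ℝ (Matrix (Fin 4) (Fin 4) ℝ)).comp H.subtype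
  let Φ : ↥H →ₗ[ℝ] T :=
    fstMap.prod ((LinearMap.pi fun q : {q : Fin d × Fin d // q.1 < q.2} =>
        (mvEval (bv q.val.1) (bv q.val.2)).comp sndMap).prod
      (LinearMap.pi fun q : {q : Fin d' × Fin d' // q.1 < q.2} =>
        (mvEval (cv q.val.1) (cv q.val.2)).comp sndMap))
  have hΦinj : Function.Injective Φ := by
    rw [← LinearMap.ker_eq_bot, LinearMap.ker_eq_bot']
    rintro ⟨p, hp⟩ h0
    have hr : p.1 = 0 := congrArg Prod.fst h0
    have hb0 : ∀ q : {q : Fin d × Fin d // q.1 < q.2},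
        (inner ℝ (mv p.2 (bv q.val.1)) (bv q.val.2) : ℝ) = 0 :=
      fun q => congrFun (congrArg Prod.fst (congrArg Prod.snd h0)) q
    have hc0 : ∀ q : {q : Fin d' × Fin d' // q.1 < q.2},
        (inner ℝ (mv p.2 (cv q.val.1)) (cv q.val.2) : ℝ) = 0 :=
      fun q => congrFun (congrArg Prod.snd (congrArg Prod.snd h0)) q
    have hA := hskew p hp
    -- mv p.2 maps V to V and V^perp to V^perp
    have hstV : ∀ w ∈ V, mv p.2 w ∈ V := hstab p hp
    have hstVp : ∀ w ∈ Vᗮ, ∀ u ∈ V, (inner ℝ (mv p.2 w) u : ℝ) = 0 := by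
      intro w hw u hu
      rw [mv_skew_adj hA, real_inner_comm]
      have : mv p.2 u ∈ V := hstV u hu
      rw [Submodule.mem_orthogonal] at hw
      rw [hw _ this]
      simp
    -- inner ℝ products of mv p.2 (bv i) with all bv j vanish
    have hball : ∀ i j : Fin d, (inner ℝ (mv p.2 (bv i)) (bv j) : ℝ) = 0 := by
      intro i j
      rcases lt_trichotomy i j with h | h | h
      · exact hb0 ⟨(i, j), h⟩
      · rw [h]; exact mv_self_inner_zero hA _
      · rw [mv_skew_adj hA, real_inner_comm]
        rw [hb0 ⟨(j, i), h⟩]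
        simp
    have hcall : ∀ i j : Fin d', (inner ℝ (mv p.2 (cv i)) (cv j) : ℝ) = 0 := by
      intro i j
      rcases lt_trichotomy i j with h | h | h
      · exact hc0 ⟨(i, j), h⟩
      · rw [h]; exact mv_self_inner_zero hA _
      · rw [mv_skew_adj hA, real_inner_comm]
        rw [hc0 ⟨(j, i), h⟩]
        simp
    -- mv p.2 kills each bv i
    have hkillb : ∀ i, mv p.2 (bv i) = 0 := by
      intro i
      have h1 : (inner ℝ (mv p.2 (bv i)) (mv p.2 (bv i)) : ℝ) = 0 :=
        hspanV _ (hstV _ (hbvV i)) _ (hball i)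
      exact inner_self_eq_zero.1 h1
    have hkillc : ∀ i, mv p.2 (cv i) = 0 := by
      intro i
      have hmem : mv p.2 (cv i) ∈ Vᗮ := by
        rw [Submodule.mem_orthogonal]
        intro u hu
        rw [real_inner_comm]
        exact hstVp _ (hcvV i) _ hu
      have h1 : (inner ℝ (mv p.2 (cv i)) (mv p.2 (cv i)) : ℝ) = 0 :=
        hspanVp _ hmem _ (hcall i)
      exact inner_self_eq_zero.1 h1
    -- mv p.2 kills everything
    have hkill : ∀ x : E4, mv p.2 x = 0 := by
      intro x
      have hx : x ∈ V ⊔ Vᗮ := by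
        rw [Submodule.sup_orthogonal_of_hasOrthogonalProjection]
        exact Submodule.mem_top
      obtain ⟨v, hv, u, hu, rfl⟩ := Submodule.mem_sup.1 hx
      have h1 : mv p.2 v = 0 := by
        have hve : v = ∑ i, b.repr ⟨v, hv⟩ i • bv i := by
          have := congrArg (Subtype.val) (b.sum_repr ⟨v, hv⟩)
          simpa only [hbv, Submodule.coe_sum, Submodule.coe_smul] using this.symm
        rw [hve, map_sum]
        refine Finset.sum_eq_zero fun i _ => ?_
        rw [map_smul, hkillb i, smul_zero]
      have h2 : mv p.2 u = 0 := by
        have hue : u = ∑ i, c.repr ⟨u, hu⟩ i • cv i := by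
          have := congrArg (Subtype.val) (c.sum_repr ⟨u, hu⟩)
          simpa only [hcv, Submodule.coe_sum, Submodule.coe_smul] using this.symm
        rw [hue, map_sum]
        refine Finset.sum_eq_zero fun i _ => ?_
        rw [map_smul, hkillc i, smul_zero]
      rw [map_add, h1, h2, add_zero]
    -- hence p.2 = 0
    have hA0 : p.2 = 0 := by
      ext i j
      have : mv p.2 (EuclideanSpace.single j 1) i = (0 : E4) i := by rw [hkill]
      rw [mv_apply] at this
      simpa [EuclideanSpace.single_apply, Finset.sum_ite_eq] using this
    refine Subtype.ext (Prod.ext hr ?_)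
    exact hA0
  have hHle : finrank ℝ ↥H ≤ finrank ℝ T := LinearMap.finrank_le_finrank_of_injective hΦinj
  have hT : finrank ℝ T = 1 + Fintype.card {q : Fin d × Fin d // q.1 < q.2}
      + Fintype.card {q : Fin d' × Fin d' // q.1 < q.2} := by
    simp [T, finrank_prod, finrank_pi, finrank_self]
    ring
  rw [hT] at hHle
  exact pair_count_final d d' hsum hdlt _ hHle

end bound

end
end SO15Aux

set_option maxHeartbeats 2000000 in
open SO15Aux in
/-- Let `p₁ ⊂ so(1,5)` be the parabolic with Levi decomposition `p₁ = (ℝ ⊕ so(4)) ⋉ ℝ⁴`,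
`π : p₁ → ℝ ⊕ so(4)` the projection, and `k ⊂ p₁` a Lie subalgebra with `dim k ≥ 8` such
that `so(4) ⊄ π(k)`.  Then `k` contains the abelian nilradical `r₁ = ℝ⁴`. -/
theorem so15_subalgebra_contains_nilradical
    (k : LieSubalgebra ℝ (Matrix (Fin 6) (Fin 6) ℝ))
    (hsub : ∀ X ∈ k, memP1 6 X)
    (hso : ¬ ∀ X : Matrix (Fin 6) (Fin 6) ℝ, memSOInner 6 X → ∃ Y ∈ k, piP1 6 Y = X)
    (hdim : 8 ≤ Module.finrank ℝ ↥k) :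
    ∀ X, memR1 6 X → X ∈ k := by
  intro X hX
  by_cases hV : Vsub k = ⊤
  · have hmem : nu X ∈ Vsub k := hV ▸ Submodule.mem_top
    obtain ⟨Z, hZk, hZ0, hZnu⟩ := (mem_Vsub k).1 hmem
    obtain ⟨_, _, _, z4, _⟩ := r1_entries (hsub Z hZk) hZ0
    have hXZ : X = Z := by
      refine p1_ext hX.1 (hsub Z hZk) ?_ ?_ ?_
      · rw [hX.2.2 0 0 rfl]
        have : Z 0 0 = 0 := congrArg Prod.fst hZ0
        rw [this]
      · intro i j hi1 hi2 hj1 hj2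
        rw [hX.2.1 i j hi1 hi2 hj1 hj2, z4 i j hi1 hi2 hj1 hj2]
      · intro i hi1 hi2
        have hlt : i.val - 1 < 4 := by omega
        have ei : emb ⟨i.val - 1, hlt⟩ = i := Fin.ext (by simp [emb_val]; omega)
        have h5 : Z (emb ⟨i.val - 1, hlt⟩) 5 = X (emb ⟨i.val - 1, hlt⟩) 5 :=
          congrArg (fun v : E4 => v ⟨i.val - 1, hlt⟩) hZnu
        rw [ei] at h5
        exact h5.symm
    rw [hXZ]
    exact hZk
  · exfalso
    have hd := dim_split (k := k) hsub
    have hb := main_bound (Vsub k) (hSub k)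
      (fun p hp i j => hSub_skew hsub hp i j)
      (fun p hp w hw => mv_stab hsub hp hw) hV
    omega
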